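/- arXiv:2204.04398 — 3 statements merged into one kernel-verified Lean document; each statement's English description precedes it below -/
import Mathlib

section
/- Let R be a two-sided Noetherian ring and M a finitely generated R-module. Then M is reflexive (the canonical map σ_M : M → M** is an isomorphism) if and only if Ext^1_{R^op}(Tr M, R) = 0 and Ext^2_{R^op}(Tr M, R) = 0, where Tr M is the Auslander transpose of M. -/
open CategoryTheory IsLocalRing

universe u

noncomputable section

variable (R : Type u) [CommRing R]

/-- `Ext^i_R(M, N)` is trivial. -/
def extVanish (M N : ModuleCat.{u} R) (i : ℕ) : Prop :=
  Subsingleton (((Ext R (ModuleCat.{u} R) i).obj (Opposite.op M)).obj N)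

/-- The `I`-torsion submodule `Γ_I(M) = {x | I^n x = 0 for some n}`. -/
def torsionGamma (I : Ideal R) (M : Type u) [AddCommGroup M] [Module R M] : Submodule R M :=
  ⨆ n : ℕ, Submodule.torsionBySet R M ((I ^ n : Ideal R) : Set R)

/-- The `i`-th local cohomology of `M` with support in the maximal ideal vanishes. -/
def lcVanish [IsLocalRing R] (M : ModuleCat.{u} R) (i : ℕ) : Prop :=
  Subsingleton ((localCohomology (maximalIdeal R) i).obj M)

/-- `M` is maximal Cohen–Macaulay: `H^i_m(M) = 0` for all `i < dim R`. -/
def IsMCM [IsLocalRing R] (M : ModuleCat.{u} R) : Prop :=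
  ∀ i : ℕ, (i : WithBot (WithTop ℕ)) < ringKrullDim R → lcVanish R M i

/-- `R` is a Cohen–Macaulay local ring. -/
def IsCMLocalRing [IsLocalRing R] : Prop :=
  IsNoetherianRing R ∧ IsMCM R (ModuleCat.of R R)

/-- `K` is a (first) syzygy of `M`. -/
def IsSyzygyOf (K M : ModuleCat.{u} R) : Prop :=
  ∃ (P : ModuleCat.{u} R) (f : P →ₗ[R] M), Module.Projective R P ∧ Module.Finite R P ∧
    Function.Surjective f ∧ Nonempty (K ≃ₗ[R] LinearMap.ker f)

/-- `K` is an `n`-th syzygy of `M`. -/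
def IsNthSyzygyOf : ℕ → ModuleCat.{u} R → ModuleCat.{u} R → Prop
  | 0, K, M => Nonempty (K ≃ₗ[R] M)
  | n + 1, K, M => ∃ N : ModuleCat.{u} R, IsSyzygyOf R N M ∧ IsNthSyzygyOf n K N

/-- `T` is an (Auslander) transpose of `M`. -/
def IsTransposeOf (T M : ModuleCat.{u} R) : Prop :=
  ∃ (P₁ P₀ : ModuleCat.{u} R) (d₁ : P₁ →ₗ[R] P₀) (d₀ : P₀ →ₗ[R] M),
    Module.Projective R P₁ ∧ Module.Finite R P₁ ∧ Module.Projective R P₀ ∧ Module.Finite R P₀ ∧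
    Function.Surjective d₀ ∧ LinearMap.range d₁ = LinearMap.ker d₀ ∧
    Nonempty (T ≃ₗ[R] (Module.Dual R P₁ ⧸ LinearMap.range d₁.dualMap))

/-- Two modules are stably isomorphic. -/
def StablyIso (M N : Type u) [AddCommGroup M] [Module R M] [AddCommGroup N] [Module R N] : Prop :=
  ∃ (P Q : ModuleCat.{u} R), Module.Projective R P ∧ Module.Finite R P ∧
    Module.Projective R Q ∧ Module.Finite R Q ∧ Nonempty ((M × P) ≃ₗ[R] (N × Q))

/-- `M` has a resolution of length `n` by finitely generated projective modules. -/
def HasProjResolLength : ℕ → ModuleCat.{u} R → Prop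
  | 0, M => Module.Projective R M ∧ Module.Finite R M
  | n + 1, M => ∃ (P : ModuleCat.{u} R) (f : P →ₗ[R] M), Module.Projective R P ∧
      Module.Finite R P ∧ Function.Surjective f ∧
      HasProjResolLength n (ModuleCat.of R (LinearMap.ker f))

/-- `M` is totally reflexive (Gorenstein projective). -/
def IsTotReflexive (M : ModuleCat.{u} R) : Prop :=
  Function.Bijective (Module.Dual.eval R M) ∧
  (∀ i : ℕ, 0 < i → extVanish R M (ModuleCat.of R R) i) ∧
  (∀ T : ModuleCat.{u} R, IsTransposeOf R T M →
    ∀ i : ℕ, 0 < i → extVanish R T (ModuleCat.of R R) i)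

/-- `M` has a resolution of length `n` by totally reflexive modules. -/
def HasGResolLength : ℕ → ModuleCat.{u} R → Prop
  | 0, M => IsTotReflexive R M
  | n + 1, M => ∃ (X : ModuleCat.{u} R) (f : X →ₗ[R] M), IsTotReflexive R X ∧
      Function.Surjective f ∧ HasGResolLength n (ModuleCat.of R (LinearMap.ker f))

/-- `R` is a Gorenstein local ring. -/
def IsGorensteinLocal [IsLocalRing R] : Prop :=
  IsNoetherianRing R ∧ ∃ d : ℕ, ringKrullDim R = (d : ℕ) ∧
    (∀ i : ℕ, i ≠ d → extVanish R (ModuleCat.of R (ResidueField R)) (ModuleCat.of R R) i) ∧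
    Nonempty ((((Ext R (ModuleCat.{u} R) d).obj
      (Opposite.op (ModuleCat.of R (ResidueField R)))).obj (ModuleCat.of R R)) ≃ₗ[R]
        ResidueField R)

/-- `R` is a regular local ring. -/
def IsRegularLocal [IsLocalRing R] : Prop :=
  IsNoetherianRing R ∧ ∃ s : Finset R, Ideal.span (s : Set R) = maximalIdeal R ∧
    (s.card : WithBot (WithTop ℕ)) = ringKrullDim R

end


noncomputable section AuxAB
open CategoryTheory Module
variable {R : Type u} [CommRing R]

def resAux (X₀ X₁ : ModuleCat.{u} R) (f : X₁ ⟶ X₀) : (n : ℕ) → Σ (A B : ModuleCat.{u} R), B ⟶ A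
  | 0 => ⟨X₀, X₁, f⟩
  | n+1 => ⟨(resAux X₀ X₁ f n).2.1, Projective.syzygies (resAux X₀ X₁ f n).2.2,
      Projective.d (resAux X₀ X₁ f n).2.2⟩

variable (X₀ X₁ : ModuleCat.{u} R) (f : X₁ ⟶ X₀)

def resX (n : ℕ) : ModuleCat.{u} R := (resAux X₀ X₁ f n).1
def resD (n : ℕ) : resX X₀ X₁ f (n+1) ⟶ resX X₀ X₁ f n := (resAux X₀ X₁ f n).2.2

def resComplex : ChainComplex (ModuleCat.{u} R) ℕ :=
  ChainComplex.of (resX X₀ X₁ f) (resD X₀ X₁ f) (by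
    intro n
    show Projective.d ((resAux X₀ X₁ f n).2.2) ≫ (resAux X₀ X₁ f n).2.2 = 0
    exact (fun {S : ShortComplex (ModuleCat.{u} R)} (_ : S.Exact) => S.zero) (exact_d_f _))

lemma resComplex_d (n : ℕ) : (resComplex X₀ X₁ f).d (n+1) n = resD X₀ X₁ f n :=
  ChainComplex.of_d _ _ n

lemma resComplex_exactAt_succ (n : ℕ) : (resComplex X₀ X₁ f).ExactAt (n+1) := by
  rw [HomologicalComplex.exactAt_iff' _ (n+2) (n+1) n (by simp) (by simp)]
  have e : (resComplex X₀ X₁ f).sc' (n+2) (n+1) n ≅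
      ShortComplex.mk (Projective.d (resD X₀ X₁ f n)) (resD X₀ X₁ f n)
        ((fun {S : ShortComplex (ModuleCat.{u} R)} (_ : S.Exact) => S.zero) (exact_d_f _)) :=
    ShortComplex.isoMk (Iso.refl _) (Iso.refl _) (Iso.refl _)
      (by simp [resComplex_d]; rfl) (by simp [resComplex_d]; rfl)
  exact (ShortComplex.exact_iff_of_iso e).2 (exact_d_f _)

variable [Projective X₀] [Projective X₁]

instance resComplex_projective (n : ℕ) : Projective ((resComplex X₀ X₁ f).X n) := by
  obtain (_ | _ | n) := n
  · exact ‹Projective X₀›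
  · exact ‹Projective X₁›
  · show Projective (Projective.syzygies _)
    infer_instance

variable (Z : ModuleCat.{u} R) (p : X₀ ⟶ Z) (hp : Function.Surjective p)
  (hf : LinearMap.range f.hom = LinearMap.ker p.hom)

lemma res_fp (hf : LinearMap.range f.hom = LinearMap.ker p.hom) : f ≫ p = 0 := by
  ext x
  have : f x ∈ LinearMap.ker p.hom := hf ▸ LinearMap.mem_range_self f.hom x
  exact this

def resolution : ProjectiveResolution Z where
  complex := resComplex X₀ X₁ f
  π := (ChainComplex.toSingle₀Equiv _ _).symm ⟨p, by
        rw [resComplex_d]; exact res_fp X₀ X₁ f Z p hf⟩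
  quasiIso := ⟨fun n => by
    cases n with
    | zero =>
      rw [ChainComplex.quasiIsoAt₀_iff, ShortComplex.quasiIso_iff_of_zeros']
      · have hex : (ShortComplex.mk f p (res_fp X₀ X₁ f Z p hf)).Exact := by
          rw [ShortComplex.moduleCat_exact_iff_range_eq_ker]; exact hf
        have hepi : Epi (ShortComplex.mk f p (res_fp X₀ X₁ f Z p hf)).g :=
          (ModuleCat.epi_iff_surjective p).2 hp
        refine (ShortComplex.exact_and_epi_g_iff_of_iso ?_).2 ⟨hex, hepi⟩
        exact ShortComplex.isoMk (Iso.refl _) (Iso.refl _) (Iso.refl _)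
            (by simp [resComplex_d]; rfl) (by simp [ChainComplex.toSingle₀Equiv]; rfl)
      all_goals rfl
    | succ n =>
      rw [quasiIsoAt_iff_exactAt']
      · exact resComplex_exactAt_succ X₀ X₁ f n
      · apply ChainComplex.exactAt_succ_single_obj⟩

lemma moduleCat_isZero_iff (M : ModuleCat.{u} R) : Limits.IsZero M ↔ Subsingleton M := by
  constructor
  · intro h
    have : (𝟙 M) = 0 := h.eq_of_src _ _
    have hz : ∀ x : M, x = 0 := fun x => by
      conv_lhs => rw [show x = (𝟙 M) x from rfl, this]
      rfl
    exact ⟨fun a b => (hz a).trans (hz b).symm⟩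
  · intro h; exact ModuleCat.isZero_of_subsingleton M



section
variable {X₀ X₁ : ModuleCat.{u} R} (f : X₁ ⟶ X₀) (N : ModuleCat.{u} R)

set_option linter.unusedSectionVars false in
lemma res_exactAt_one_iff :
    ((resComplex X₀ X₁ f).linearYonedaObj R N).ExactAt 1 ↔
      (∀ g : X₁ →ₗ[R] N, LinearMap.ker f.hom ≤ LinearMap.ker g → ∃ h : X₀ →ₗ[R] N, h.comp f.hom = g) := by
  have hrange : LinearMap.range (Projective.d f).hom = LinearMap.ker f.hom :=
    (exact_d_f f).moduleCat_range_eq_ker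
  have e10 : (resComplex X₀ X₁ f).d 1 0 = f := resComplex_d X₀ X₁ f 0
  have e21 : (resComplex X₀ X₁ f).d 2 1 = Projective.d f := resComplex_d X₀ X₁ f 1
  rw [HomologicalComplex.exactAt_iff' _ 0 1 2 (by simp) (by simp),
    ShortComplex.moduleCat_exact_iff]
  constructor
  · intro H g hg
    have hcoc : ((resComplex X₀ X₁ f).linearYonedaObj R N).d 1 2 (ModuleCat.ofHom g) = 0 := by
      show (resComplex X₀ X₁ f).d 2 1 ≫ ModuleCat.ofHom g = 0
      rw [e21]
      ext x
      exact hg (hrange ▸ LinearMap.mem_range_self _ x)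
    obtain ⟨h, hh⟩ := H _ hcoc
    refine ⟨h.hom, ?_⟩
    show h.hom.comp f.hom = (ModuleCat.ofHom g).hom
    rw [← hh]
    show h.hom.comp f.hom = ((resComplex X₀ X₁ f).d 1 0 ≫ h).hom
    rw [e10]
    rfl
  · intro H g hg
    let g' : (resComplex X₀ X₁ f).X 1 ⟶ N := g
    have hg' : (resComplex X₀ X₁ f).d 2 1 ≫ g' = 0 := hg
    rw [e21] at hg'
    have hle : LinearMap.ker f.hom ≤ LinearMap.ker g'.hom := by
      intro x hx
      rw [← hrange] at hx
      obtain ⟨y, rfl⟩ := hx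
      exact congrFun (congrArg (fun φ => ⇑(ModuleCat.Hom.hom φ)) hg') y
    clear hg' hg
    obtain ⟨h, hh⟩ := H g'.hom hle
    refine ⟨ModuleCat.ofHom h, ?_⟩
    show (resComplex X₀ X₁ f).d 1 0 ≫ ModuleCat.ofHom h = g
    rw [e10]
    exact ModuleCat.hom_ext hh

end

section
variable {X₀ X₁ : ModuleCat.{u} R} (f : X₁ ⟶ X₀) (N : ModuleCat.{u} R)

set_option linter.unusedSectionVars false in
lemma res_exactAt_two_iff :
    ((resComplex X₀ X₁ f).linearYonedaObj R N).ExactAt 2 ↔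
      (∀ φ : ↥(LinearMap.ker f.hom) →ₗ[R] N,
        ∃ h : X₁ →ₗ[R] N, h.comp (LinearMap.ker f.hom).subtype = φ) := by
  set d₂ : (resComplex X₀ X₁ f).X 2 ⟶ X₁ := Projective.d f with hd₂def
  have hrange2 : LinearMap.range d₂.hom = LinearMap.ker f.hom :=
    (exact_d_f f).moduleCat_range_eq_ker
  have hrange3 : LinearMap.range (Projective.d d₂).hom = LinearMap.ker d₂.hom :=
    (exact_d_f d₂).moduleCat_range_eq_ker
  have e21 : (resComplex X₀ X₁ f).d 2 1 = d₂ := resComplex_d X₀ X₁ f 1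
  have e32 : (resComplex X₀ X₁ f).d 3 2 = Projective.d d₂ := resComplex_d X₀ X₁ f 2
  rw [HomologicalComplex.exactAt_iff' _ 1 2 3 (by simp) (by simp),
    ShortComplex.moduleCat_exact_iff]
  constructor
  · intro H φ
    let g' : (resComplex X₀ X₁ f).X 2 ⟶ N :=
      ModuleCat.ofHom (φ.comp (d₂.hom.codRestrict (LinearMap.ker f.hom)
        (fun x => hrange2 ▸ LinearMap.mem_range_self _ x)) : _ →ₗ[R] _)
    have hcoc : ((resComplex X₀ X₁ f).linearYonedaObj R N).d 2 3 g' = 0 := by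
      show (resComplex X₀ X₁ f).d 3 2 ≫ g' = 0
      rw [e32]
      ext x
      have hx : d₂ ((Projective.d d₂) x) = 0 := by
        have : (Projective.d d₂) x ∈ LinearMap.ker d₂.hom :=
          hrange3 ▸ LinearMap.mem_range_self _ x
        exact this
      show φ ⟨d₂ ((Projective.d d₂) x), _⟩ = 0
      have : (⟨d₂ ((Projective.d d₂) x), by
          exact hrange2 ▸ LinearMap.mem_range_self _ _⟩ : ↥(LinearMap.ker f.hom)) = 0 := by
        ext; exact hx
      rw [this, map_zero]
    obtain ⟨h, hh⟩ := H g' hcoc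
    let h' : X₁ ⟶ N := h
    have hh' : d₂ ≫ h' = g' := by
      rw [← e21]; exact hh
    refine ⟨h'.hom, ?_⟩
    ext z
    obtain ⟨zv, hz⟩ := z
    rw [← hrange2] at hz
    obtain ⟨y, hy⟩ := hz
    subst hy
    show h' (d₂ y) = φ ⟨d₂ y, hz⟩
    have h1 : h' (d₂ y) = g' y := congrFun (congrArg (fun φ => ⇑(ModuleCat.Hom.hom φ)) hh') y
    have h2 : g' y = φ ⟨d₂ y, hrange2 ▸ LinearMap.mem_range_self _ y⟩ := rfl
    rw [h1, h2]
  · intro H g hg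
    let g' : (resComplex X₀ X₁ f).X 2 ⟶ N := g
    have hg' : (resComplex X₀ X₁ f).d 3 2 ≫ g' = 0 := hg
    rw [e32] at hg'
    have hle : LinearMap.ker d₂.hom ≤ LinearMap.ker g'.hom := by
      intro x hx
      rw [← hrange3] at hx
      obtain ⟨y, rfl⟩ := hx
      exact congrFun (congrArg (fun φ => ⇑(ModuleCat.Hom.hom φ)) hg') y
    let gbar := (LinearMap.ker d₂.hom).liftQ (g'.hom : _ →ₗ[R] N) hle
    let e := d₂.hom.quotKerEquivRange
    let φ : ↥(LinearMap.ker f.hom) →ₗ[R] N :=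
      (gbar.comp e.symm.toLinearMap).comp
        (LinearEquiv.ofEq _ _ hrange2.symm).toLinearMap
    obtain ⟨h, hh⟩ := H φ
    refine ⟨ModuleCat.ofHom h, ?_⟩
    show (resComplex X₀ X₁ f).d 2 1 ≫ (ModuleCat.ofHom h : X₁ ⟶ N) = g'
    rw [e21]
    ext x
    have hmem : d₂ x ∈ LinearMap.ker f.hom := hrange2 ▸ LinearMap.mem_range_self _ x
    have h1 : h (d₂ x) = φ ⟨d₂ x, hmem⟩ := congrFun (congrArg DFunLike.coe hh)
      (⟨d₂ x, hmem⟩ : ↥(LinearMap.ker f.hom))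
    show h (d₂ x) = g' x
    rw [h1]
    show gbar (e.symm ((LinearEquiv.ofEq _ _ hrange2.symm) ⟨d₂ x, hmem⟩)) = g' x
    have h2 : (LinearEquiv.ofEq _ _ hrange2.symm) (⟨d₂ x, hmem⟩ : ↥(LinearMap.ker f.hom)) =
        ⟨d₂ x, LinearMap.mem_range_self _ x⟩ := rfl
    have h3 : e.symm ⟨d₂ x, LinearMap.mem_range_self _ x⟩ =
        Submodule.Quotient.mk x := by
      apply e.injective
      simp only [LinearEquiv.apply_symm_apply]
      exact Subtype.ext (d₂.hom.quotKerEquivRange_apply_mk x).symm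
    rw [h2, h3]
    rfl

end

variable {R : Type u} [CommRing R]
variable {M P₀ P₁ : Type u} [AddCommGroup M] [Module R M] [AddCommGroup P₀] [Module R P₀]
  [AddCommGroup P₁] [Module R P₁]
variable (d₁ : P₁ →ₗ[R] P₀) (d₀ : P₀ →ₗ[R] M)

section
variable (hsurj : Function.Surjective d₀) (hex : LinearMap.range d₁ = LinearMap.ker d₀)

include hsurj hex in
lemma ker_dualMap_eq : LinearMap.ker d₁.dualMap = LinearMap.range d₀.dualMap := by
  ext φ
  constructor
  · intro hφ
    have hle : LinearMap.ker d₀ ≤ LinearMap.ker φ := by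
      rw [← hex]
      rintro x ⟨y, rfl⟩
      exact congrFun (congrArg DFunLike.coe hφ) y
    let e := d₀.quotKerEquivOfSurjective hsurj
    refine ⟨((LinearMap.ker d₀).liftQ φ hle).comp (e.symm : M →ₗ[R] _), ?_⟩
    ext x
    have : e.symm (d₀ x) = Submodule.Quotient.mk x := by
      apply e.injective
      simp [e, LinearMap.quotKerEquivOfSurjective]
    show ((LinearMap.ker d₀).liftQ φ hle) (e.symm (d₀ x)) = φ x
    rw [this]
    rfl
  · rintro ⟨ψ, rfl⟩
    ext y
    show ψ (d₀ (d₁ y)) = 0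
    have : d₁ y ∈ LinearMap.ker d₀ := hex ▸ LinearMap.mem_range_self d₁ y
    rw [this]
    simp

variable [IsReflexive R P₀] [IsReflexive R P₁]

include hsurj hex in
lemma degree_one_iff :
    (∀ g : Dual R (Dual R P₀), LinearMap.ker d₁.dualMap ≤ LinearMap.ker g →
      ∃ h : Dual R (Dual R P₁), h.comp d₁.dualMap = g) ↔
    Function.Injective (Dual.eval R M) := by
  have hker := ker_dualMap_eq d₁ d₀ hsurj hex
  constructor
  · intro H
    rw [injective_iff_map_eq_zero]
    intro m hm
    obtain ⟨x₀, rfl⟩ := hsurj m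
    have hg : LinearMap.ker d₁.dualMap ≤ LinearMap.ker (Dual.eval R P₀ x₀) := by
      rw [hker]
      rintro φ ⟨ψ, rfl⟩
      show ψ (d₀ x₀) = 0
      exact congrFun (congrArg DFunLike.coe hm) ψ
    obtain ⟨h, hh⟩ := H (Dual.eval R P₀ x₀) hg
    obtain ⟨y, rfl⟩ := (bijective_dual_eval R P₁).2 h
    have : d₁ y = x₀ := by
      apply (bijective_dual_eval R P₀).1
      ext φ
      exact congrFun (congrArg DFunLike.coe hh) φ
    rw [← this]
    have : d₁ y ∈ LinearMap.ker d₀ := hex ▸ LinearMap.mem_range_self d₁ y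
    exact this
  · intro H g hg
    obtain ⟨x₀, rfl⟩ := (bijective_dual_eval R P₀).2 g
    have hm : Dual.eval R M (d₀ x₀) = 0 := by
      ext ψ
      have : d₀.dualMap ψ ∈ LinearMap.ker d₁.dualMap := hker ▸ LinearMap.mem_range_self _ ψ
      exact hg this
    have : d₀ x₀ = 0 := H (by rw [hm]; simp)
    have hx₀ : x₀ ∈ LinearMap.range d₁ := hex ▸ this
    obtain ⟨y, rfl⟩ := hx₀
    exact ⟨Dual.eval R P₁ y, by ext φ; rfl⟩

include hsurj hex in
lemma degree_two_iff :
    (∀ φ : ↥(LinearMap.ker d₁.dualMap) →ₗ[R] R,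
      ∃ h : Dual R (Dual R P₀), h.comp (LinearMap.ker d₁.dualMap).subtype = φ) ↔
    Function.Surjective (Dual.eval R M) := by
  have hker := ker_dualMap_eq d₁ d₀ hsurj hex
  have hinj : Function.Injective d₀.dualMap := by
    intro ψ ψ' hψ
    ext m
    obtain ⟨x, rfl⟩ := hsurj m
    exact congrFun (congrArg DFunLike.coe hψ) x
  constructor
  · intro H ξ
    let e : Dual R M ≃ₗ[R] LinearMap.range d₀.dualMap := LinearEquiv.ofInjective d₀.dualMap hinj
    let e2 : ↥(LinearMap.ker d₁.dualMap) ≃ₗ[R] ↥(LinearMap.range d₀.dualMap) :=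
      LinearEquiv.ofEq _ _ hker
    obtain ⟨h, hh⟩ := H ((ξ.comp e.symm.toLinearMap).comp e2.toLinearMap)
    obtain ⟨x₀, rfl⟩ := (bijective_dual_eval R P₀).2 h
    refine ⟨d₀ x₀, ?_⟩
    ext ψ
    have h1 : Dual.eval R P₀ x₀ (d₀.dualMap ψ) =
        ξ (e.symm (e2 ⟨d₀.dualMap ψ, hker ▸ LinearMap.mem_range_self _ ψ⟩)) := by
      have := congrFun (congrArg DFunLike.coe hh)
        (⟨d₀.dualMap ψ, hker ▸ LinearMap.mem_range_self _ ψ⟩ : ↥(LinearMap.ker d₁.dualMap))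
      exact this
    have h2 : e.symm (e2 ⟨d₀.dualMap ψ, hker ▸ LinearMap.mem_range_self _ ψ⟩) = ψ := by
      apply e.injective
      simp [e2, LinearEquiv.ofEq]
      rfl
    show ψ (d₀ x₀) = ξ ψ
    calc ψ (d₀ x₀) = Dual.eval R P₀ x₀ (d₀.dualMap ψ) := rfl
    _ = ξ ψ := by rw [h1, h2]
  · intro H φ
    -- φ : ker d₁.dualMap → R ; transport to ξ : Dual (Dual M)
    let ξ : Dual R (Dual R M) :=
      φ.comp ((LinearEquiv.ofEq _ _ hker.symm : LinearMap.range d₀.dualMap ≃ₗ[R] _).toLinearMap.comp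
        ((LinearEquiv.ofInjective d₀.dualMap hinj : Dual R M ≃ₗ[R] LinearMap.range d₀.dualMap) : _ →ₗ[R] _))
    obtain ⟨m, hm⟩ := H ξ
    obtain ⟨x₀, rfl⟩ := hsurj m
    refine ⟨Dual.eval R P₀ x₀, ?_⟩
    ext z
    obtain ⟨zv, hz⟩ := z
    have : zv ∈ LinearMap.range d₀.dualMap := hker ▸ hz
    obtain ⟨ψ, rfl⟩ := this
    show (d₀.dualMap ψ) x₀ = φ ⟨d₀.dualMap ψ, hz⟩
    have h1 : ψ (d₀ x₀) = ξ ψ := by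
      rw [← hm]; rfl
    have h2 : ξ ψ = φ ⟨d₀.dualMap ψ, hz⟩ := by
      show φ _ = φ _
      congr 1
    calc (d₀.dualMap ψ) x₀ = ψ (d₀ x₀) := rfl
    _ = φ ⟨d₀.dualMap ψ, hz⟩ := by rw [h1, h2]


end

lemma extVanish_congr {R : Type u} [CommRing R] {A B : ModuleCat.{u} R}
    (N : ModuleCat.{u} R) (e : A ≃ₗ[R] B) (i : ℕ) :
    extVanish R A N i ↔ extVanish R B N i := by
  unfold extVanish
  have iso : B ≅ A := e.symm.toModuleIso
  have iso2 : (((Ext R (ModuleCat.{u} R) i).obj (Opposite.op A)).obj N) ≅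
      (((Ext R (ModuleCat.{u} R) i).obj (Opposite.op B)).obj N) :=
    ((Ext R (ModuleCat.{u} R) i).mapIso iso.op).app N
  exact Equiv.subsingleton_congr iso2.toLinearEquiv.toEquiv

lemma extVanish_iff_exactAt {R : Type u} [CommRing R] (Z N : ModuleCat.{u} R)
    (P : ProjectiveResolution Z) (i : ℕ) :
    extVanish R Z N i ↔ (P.complex.linearYonedaObj R N).ExactAt i := by
  unfold extVanish
  rw [HomologicalComplex.exactAt_iff_isZero_homology]
  constructor
  · intro h
    refine Limits.IsZero.of_iso ?_ (P.isoExt i N).symm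
    rw [moduleCat_isZero_iff]; exact h
  · intro h
    rw [← moduleCat_isZero_iff]
    exact h.of_iso (P.isoExt i N)

lemma transpose_vanish_iff {R : Type u} [CommRing R] (M : ModuleCat.{u} R)
    {P₁ P₀ : ModuleCat.{u} R} (d₁ : P₁ →ₗ[R] P₀) (d₀ : P₀ →ₗ[R] M)
    (h1 : Module.Projective R P₁) (h2 : Module.Finite R P₁)
    (h3 : Module.Projective R P₀) (h4 : Module.Finite R P₀)
    (hs : Function.Surjective d₀) (hex : LinearMap.range d₁ = LinearMap.ker d₀) :
    (extVanish R (ModuleCat.of R (Module.Dual R P₁ ⧸ LinearMap.range d₁.dualMap))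
        (ModuleCat.of R R) 1 ↔ Function.Injective (Module.Dual.eval R M)) ∧
    (extVanish R (ModuleCat.of R (Module.Dual R P₁ ⧸ LinearMap.range d₁.dualMap))
        (ModuleCat.of R R) 2 ↔ Function.Surjective (Module.Dual.eval R M)) := by
  haveI := h1; haveI := h2; haveI := h3; haveI := h4
  let X₀ : ModuleCat.{u} R := ModuleCat.of R (Module.Dual R P₁)
  let X₁ : ModuleCat.{u} R := ModuleCat.of R (Module.Dual R P₀)
  let f : X₁ ⟶ X₀ := ModuleCat.ofHom d₁.dualMap
  haveI : Projective X₀ := (IsProjective.iff_projective _).1 inferInstance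
  haveI : Projective X₁ := (IsProjective.iff_projective _).1 inferInstance
  let Z : ModuleCat.{u} R :=
    ModuleCat.of R (Module.Dual R P₁ ⧸ LinearMap.range d₁.dualMap)
  let p : X₀ ⟶ Z := ModuleCat.ofHom (LinearMap.range d₁.dualMap).mkQ
  have hp : Function.Surjective p := Submodule.mkQ_surjective _
  have hfp : LinearMap.range f.hom = LinearMap.ker p.hom := by
    show LinearMap.range d₁.dualMap = LinearMap.ker (LinearMap.range d₁.dualMap).mkQ
    rw [Submodule.ker_mkQ]
  let P := resolution X₀ X₁ f Z p hp hfp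
  constructor
  · exact (extVanish_iff_exactAt Z (ModuleCat.of R R) P 1).trans
      ((res_exactAt_one_iff f (ModuleCat.of R R)).trans (degree_one_iff d₁ d₀ hs hex))
  · exact (extVanish_iff_exactAt Z (ModuleCat.of R R) P 2).trans
      ((res_exactAt_two_iff f (ModuleCat.of R R)).trans (degree_two_iff d₁ d₀ hs hex))

end AuxAB

theorem stmt_9 (R : Type u) [CommRing R] [IsNoetherianRing R]
    (M : ModuleCat.{u} R) [Module.Finite R M] :
    Function.Bijective (Module.Dual.eval R M) ↔
    (∀ T : ModuleCat.{u} R, IsTransposeOf R T M →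
      extVanish R T (ModuleCat.of R R) 1 ∧ extVanish R T (ModuleCat.of R R) 2) := by
  constructor
  · intro hbij T hT
    obtain ⟨P₁, P₀, d₁, d₀, h1, h2, h3, h4, hs, hex, ⟨e⟩⟩ := hT
    obtain ⟨hi1, hi2⟩ := transpose_vanish_iff M d₁ d₀ h1 h2 h3 h4 hs hex
    rw [extVanish_congr (B := ModuleCat.of R
        (Module.Dual R P₁ ⧸ LinearMap.range d₁.dualMap)) (ModuleCat.of R R) e 1,
      extVanish_congr (B := ModuleCat.of R
        (Module.Dual R P₁ ⧸ LinearMap.range d₁.dualMap)) (ModuleCat.of R R) e 2]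
    exact ⟨hi1.2 hbij.injective, hi2.2 hbij.surjective⟩
  · intro H
    obtain ⟨n, d₀, hs⟩ := Module.Finite.exists_fin' R M
    haveI : Module.Finite R ↥(LinearMap.ker d₀) :=
      Module.Finite.iff_fg.2 (IsNoetherian.noetherian _)
    obtain ⟨m, g, hg⟩ := Module.Finite.exists_fin' R ↥(LinearMap.ker d₀)
    let d₁ : (Fin m → R) →ₗ[R] (Fin n → R) := (LinearMap.ker d₀).subtype ∘ₗ g
    have hex : LinearMap.range d₁ = LinearMap.ker d₀ := by
      rw [LinearMap.range_comp, LinearMap.range_eq_top.2 hg, Submodule.map_top,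
        Submodule.range_subtype]
    obtain ⟨hi1, hi2⟩ := transpose_vanish_iff M
      (P₁ := ModuleCat.of R (Fin m → R)) (P₀ := ModuleCat.of R (Fin n → R))
      d₁ d₀ (inferInstanceAs (Module.Projective R (Fin m → R)))
      (inferInstanceAs (Module.Finite R (Fin m → R)))
      (inferInstanceAs (Module.Projective R (Fin n → R)))
      (inferInstanceAs (Module.Finite R (Fin n → R))) hs hex
    have hT : IsTransposeOf R (ModuleCat.of R
        (Module.Dual R (ModuleCat.of R (Fin m → R)) ⧸ LinearMap.range d₁.dualMap)) M :=
      ⟨ModuleCat.of R (Fin m → R), ModuleCat.of R (Fin n → R), d₁, d₀,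
        inferInstanceAs (Module.Projective R (Fin m → R)),
        inferInstanceAs (Module.Finite R (Fin m → R)),
        inferInstanceAs (Module.Projective R (Fin n → R)),
        inferInstanceAs (Module.Finite R (Fin n → R)), hs, hex,
        ⟨LinearEquiv.refl _ _⟩⟩
    obtain ⟨v1, v2⟩ := H _ hT
    exact ⟨hi1.1 v1, hi2.1 v2⟩
end

section
/- Let R be a two-sided Noetherian ring and let 0 → L → M → N → 0 be a short exact sequence of finitely generated R-modules with Hom_R(L, R) = 0. Then Ω Tr M and Ω Tr N are stably isomorphic: there exist finitely generated projective modules P, Q with Ω Tr M ⊕ P ≅ Ω Tr N ⊕ Q. -/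
open CategoryTheory IsLocalRing

universe u

section Helpers
open Module LinearMap
variable {R : Type u} [CommRing R]

variable {A B M N T P P' : Type u}
  [AddCommGroup A] [Module R A] [AddCommGroup B] [Module R B]
  [AddCommGroup M] [Module R M] [AddCommGroup N] [Module R N]
  [AddCommGroup T] [Module R T] [AddCommGroup P] [Module R P]
  [AddCommGroup P'] [Module R P']

/-- A surjection onto a projective module splits: `M ≃ ker f × N`. -/
theorem splitEquiv (f : M →ₗ[R] N) (hf : Function.Surjective f)
    [Module.Projective R N] : Nonempty (M ≃ₗ[R] (LinearMap.ker f × N)) := by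
  obtain ⟨s, hs⟩ := Module.projective_lifting_property f (.id) hf
  have hs' : ∀ x, f (s x) = x := fun x => LinearMap.congr_fun hs x
  have hker : ∀ c : M, ((LinearMap.id : M →ₗ[R] M) - s ∘ₗ f) c ∈ LinearMap.ker f := fun c => by simp [hs']
  refine ⟨LinearEquiv.ofLinear
    ((((LinearMap.id : M →ₗ[R] M) - s ∘ₗ f).codRestrict (LinearMap.ker f) hker).prod f)
    ((LinearMap.ker f).subtype.coprod s) ?_ ?_⟩
  · apply LinearMap.ext; rintro ⟨⟨k, hk⟩, n⟩
    apply Prod.ext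
    · apply Subtype.ext
      simp [LinearMap.mem_ker.mp hk, hs']
    · simp [LinearMap.mem_ker.mp hk, hs']
  · apply LinearMap.ext; intro m
    simp

/-- Schanuel's lemma. -/
theorem schanuel (p : A →ₗ[R] T) (q : B →ₗ[R] T)
    (hp : Function.Surjective p) (hq : Function.Surjective q)
    [Module.Projective R A] [Module.Projective R B] :
    Nonempty ((LinearMap.ker p × B) ≃ₗ[R] (LinearMap.ker q × A)) := by
  set u : A × B →ₗ[R] T := p ∘ₗ LinearMap.fst R A B - q ∘ₗ LinearMap.snd R A B with hu
  set X := LinearMap.ker u with hX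
  have memX : ∀ z : A × B, z ∈ X ↔ p z.1 = q z.2 := by
    intro z; simp [hX, hu, sub_eq_zero]
  -- projections
  set π₁ : X →ₗ[R] A := (LinearMap.fst R A B) ∘ₗ X.subtype with hπ₁
  set π₂ : X →ₗ[R] B := (LinearMap.snd R A B) ∘ₗ X.subtype with hπ₂
  have hπ₁s : Function.Surjective π₁ := by
    intro a
    obtain ⟨b, hb⟩ := hq (p a)
    exact ⟨⟨(a, b), (memX (a, b)).mpr hb.symm⟩, rfl⟩
  have hπ₂s : Function.Surjective π₂ := by
    intro b
    obtain ⟨a, ha⟩ := hp (q b)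
    exact ⟨⟨(a, b), (memX (a, b)).mpr ha⟩, rfl⟩
  -- ker π₁ ≃ ker q
  have e₁ : LinearMap.ker π₁ ≃ₗ[R] LinearMap.ker q :=
    { toFun := fun x => ⟨(x.1.1).2, by
        have h1 : (x.1.1).1 = 0 := LinearMap.mem_ker.mp x.2
        have h2 := (memX x.1.1).mp x.1.2
        rw [h1, map_zero] at h2
        simpa using h2.symm⟩
      map_add' := fun x y => rfl
      map_smul' := fun c x => rfl
      invFun := fun b => ⟨⟨(0, b.1), (memX (0, b.1)).mpr
          (by simp [LinearMap.mem_ker.mp b.2])⟩, by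
        simp [hπ₁, LinearMap.mem_ker]⟩
      left_inv := fun x => by
        apply Subtype.ext; apply Subtype.ext
        exact Prod.ext (LinearMap.mem_ker.mp x.2).symm rfl
      right_inv := fun b => rfl }
  have e₂ : LinearMap.ker π₂ ≃ₗ[R] LinearMap.ker p :=
    { toFun := fun x => ⟨(x.1.1).1, by
        have h1 : (x.1.1).2 = 0 := LinearMap.mem_ker.mp x.2
        have h2 := (memX x.1.1).mp x.1.2
        rw [h1, map_zero] at h2
        simpa using h2⟩
      map_add' := fun x y => rfl
      map_smul' := fun c x => rfl
      invFun := fun a => ⟨⟨(a.1, 0), (memX (a.1, 0)).mpr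
          (by simp [LinearMap.mem_ker.mp a.2])⟩, by
        simp [hπ₂, LinearMap.mem_ker]⟩
      left_inv := fun x => by
        apply Subtype.ext; apply Subtype.ext
        exact Prod.ext rfl (LinearMap.mem_ker.mp x.2).symm
      right_inv := fun a => rfl }
  obtain ⟨s₁⟩ := splitEquiv π₁ hπ₁s
  obtain ⟨s₂⟩ := splitEquiv π₂ hπ₂s
  exact ⟨((LinearEquiv.prodCongr e₂.symm (LinearEquiv.refl R B)).trans
      s₂.symm).trans
      (s₁.trans (LinearEquiv.prodCongr e₁ (LinearEquiv.refl R A)))⟩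

/-- Factor a map through a surjection whose kernel it kills. -/
theorem factor_through (g : M →ₗ[R] N) (hg : Function.Surjective g)
    (φ : M →ₗ[R] P) (h : LinearMap.ker g ≤ LinearMap.ker φ) :
    ∃ ψ : N →ₗ[R] P, ψ ∘ₗ g = φ := by
  refine ⟨((LinearMap.ker g).liftQ φ h) ∘ₗ (g.quotKerEquivOfSurjective hg).symm.toLinearMap, ?_⟩
  apply LinearMap.ext; intro m
  have : (g.quotKerEquivOfSurjective hg).symm (g m) = Submodule.Quotient.mk m := by
    rw [LinearEquiv.symm_apply_eq]
    rfl
  simp [this]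

/-- Quotient of a product by `S × ⊥`. -/
theorem quotProdEquiv (S : Submodule R A) :
    Nonempty (((A × B) ⧸ (S.prod (⊥ : Submodule R B))) ≃ₗ[R] ((A ⧸ S) × B)) := by
  set θ : A × B →ₗ[R] ((A ⧸ S) × B) :=
    (S.mkQ ∘ₗ LinearMap.fst R A B).prod (LinearMap.snd R A B) with hθdef
  have hθ : Function.Surjective θ := by
    rintro ⟨a, b⟩
    obtain ⟨x, rfl⟩ := S.mkQ_surjective a
    exact ⟨(x, b), rfl⟩
  have hker : LinearMap.ker θ = S.prod ⊥ := by
    ext z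
    simp [hθdef, LinearMap.mem_ker, Prod.ext_iff, Submodule.Quotient.mk_eq_zero,
      Submodule.mem_prod]
  exact ⟨(Submodule.quotEquivOfEq _ _ hker.symm).trans (θ.quotKerEquivOfSurjective hθ)⟩

theorem cokerProd (d : P →ₗ[R] M) (d' : P' →ₗ[R] M) (hd : Function.Surjective d)
    [Module.Projective R P'] :
    Nonempty (((Dual R P ⧸ LinearMap.range d.dualMap) × Dual R P') ≃ₗ[R]
      (Dual R (P × P') ⧸ LinearMap.range (d.coprod d').dualMap)) := by
  obtain ⟨h, hh⟩ := Module.projective_lifting_property d d' hd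
  set α : (P × P') ≃ₗ[R] (P × P') := LinearEquiv.ofLinear
    ((LinearMap.fst R P P' + h ∘ₗ LinearMap.snd R P P').prod (LinearMap.snd R P P'))
    ((LinearMap.fst R P P' - h ∘ₗ LinearMap.snd R P P').prod (LinearMap.snd R P P'))
    (by apply LinearMap.ext; rintro ⟨p, p'⟩; simp)
    (by apply LinearMap.ext; rintro ⟨p, p'⟩; simp) with hαdef
  have hαd : (d.coprod (0 : P' →ₗ[R] M)) ∘ₗ (α : (P × P') →ₗ[R] (P × P')) = d.coprod d' := by
    apply LinearMap.ext; rintro ⟨p, p'⟩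
    simp [hαdef]
    exact LinearMap.congr_fun hh p' 
  set ε := Module.dualProdDualEquivDual R P P' with hεdef
  have hεcomp : (ε : (Dual R P × Dual R P') →ₗ[R] Dual R (P × P')) ∘ₗ
      ((d.dualMap).prod (0 : Dual R M →ₗ[R] Dual R P'))
      = (d.coprod (0 : P' →ₗ[R] M)).dualMap := by
    apply LinearMap.ext; intro φ
    apply LinearMap.ext; rintro ⟨p, p'⟩
    simp [hεdef, Module.dualProdDualEquivDual]
  have hrange0 : LinearMap.range ((d.dualMap).prod (0 : Dual R M →ₗ[R] Dual R P'))
      = (LinearMap.range d.dualMap).prod ⊥ := by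
    ext z
    simp only [LinearMap.mem_range, Submodule.mem_prod, Submodule.mem_bot,
      LinearMap.prod_apply, Function.prod, LinearMap.zero_apply]
    constructor
    · rintro ⟨φ, rfl⟩; exact ⟨⟨φ, rfl⟩, rfl⟩
    · rintro ⟨⟨φ, hφ⟩, h2⟩
      refine ⟨φ, ?_⟩
      rw [hφ]
      exact (Prod.ext rfl h2.symm)
  have hmap1 : Submodule.map ε.toLinearMap ((LinearMap.range d.dualMap).prod ⊥)
      = LinearMap.range (d.coprod (0 : P' →ₗ[R] M)).dualMap := by
    rw [← hrange0, ← hεcomp, LinearMap.range_comp]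
  have hmap2 : Submodule.map α.dualMap.toLinearMap
      (LinearMap.range (d.coprod (0 : P' →ₗ[R] M)).dualMap)
      = LinearMap.range (d.coprod d').dualMap := by
    ext ψ
    simp only [Submodule.mem_map, LinearMap.mem_range]
    constructor
    · rintro ⟨_, ⟨φ, rfl⟩, rfl⟩
      refine ⟨φ, ?_⟩
      rw [← hαd]; rfl
    · rintro ⟨φ, rfl⟩
      refine ⟨(d.coprod (0 : P' →ₗ[R] M)).dualMap φ, ⟨φ, rfl⟩, ?_⟩
      rw [← hαd]; rfl
  obtain ⟨e₀⟩ := quotProdEquiv (B := Dual R P') (LinearMap.range d.dualMap)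
  exact ⟨(e₀.symm.trans (Submodule.Quotient.equiv _ _ ε hmap1)).trans
    (Submodule.Quotient.equiv _ _ α.dualMap hmap2)⟩

/-- Coker version of Schanuel's lemma. -/
theorem coSchanuel (d : P →ₗ[R] M) (d' : P' →ₗ[R] M)
    (hd : Function.Surjective d) (hd' : Function.Surjective d')
    [Module.Projective R P] [Module.Projective R P'] :
    Nonempty (((Dual R P ⧸ LinearMap.range d.dualMap) × Dual R P') ≃ₗ[R]
      ((Dual R P' ⧸ LinearMap.range d'.dualMap) × Dual R P)) := by
  obtain ⟨e₁⟩ := cokerProd d d' hd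
  obtain ⟨e₂⟩ := cokerProd d' d hd'
  -- swap equivalence between the two middle quotients
  set σ : (P' × P) ≃ₗ[R] (P × P') := LinearEquiv.prodComm R P' P with hσdef
  have hσd : (d.coprod d') ∘ₗ (σ : (P' × P) →ₗ[R] (P × P')) = d'.coprod d := by
    apply LinearMap.ext; rintro ⟨p', p⟩
    simp [hσdef, add_comm]
  have hmap : Submodule.map σ.dualMap.toLinearMap (LinearMap.range (d.coprod d').dualMap)
      = LinearMap.range (d'.coprod d).dualMap := by
    ext ψ
    simp only [Submodule.mem_map, LinearMap.mem_range]
    constructor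
    · rintro ⟨_, ⟨φ, rfl⟩, rfl⟩
      refine ⟨φ, ?_⟩
      rw [← hσd]; rfl
    · rintro ⟨φ, rfl⟩
      refine ⟨(d.coprod d').dualMap φ, ⟨φ, rfl⟩, ?_⟩
      rw [← hσd]; rfl
  exact ⟨(e₁.trans (Submodule.Quotient.equiv _ _ σ.dualMap hmap)).trans e₂.symm⟩

/-- A syzygy of a transpose is stably the cokernel of the dual of the projective cover. -/
theorem trSyzygy {P₁ P₀ M' T Q K : Type u}
    [AddCommGroup P₁] [Module R P₁] [AddCommGroup P₀] [Module R P₀]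
    [AddCommGroup M'] [Module R M'] [AddCommGroup T] [Module R T]
    [AddCommGroup Q] [Module R Q] [AddCommGroup K] [Module R K]
    [Module.Projective R P₁] [Module.Finite R P₁] [Module.Projective R Q]
    (d₁ : P₁ →ₗ[R] P₀) (d₀ : P₀ →ₗ[R] M') (hd₀ : Function.Surjective d₀)
    (hex : LinearMap.range d₁ = LinearMap.ker d₀)
    (eT : T ≃ₗ[R] (Dual R P₁ ⧸ LinearMap.range d₁.dualMap))
    (q : Q →ₗ[R] T) (hq : Function.Surjective q) (eK : K ≃ₗ[R] LinearMap.ker q) :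
    Nonempty ((K × Dual R P₁) ≃ₗ[R]
      ((Dual R P₀ ⧸ LinearMap.range d₀.dualMap) × Q)) := by
  set q' : Q →ₗ[R] (Dual R P₁ ⧸ LinearMap.range d₁.dualMap) := eT.toLinearMap ∘ₗ q
    with hq'def
  have hq' : Function.Surjective q' := by
    intro t
    obtain ⟨y, hy⟩ := hq (eT.symm t)
    exact ⟨y, by simp [hq'def, hy]⟩
  have hkq' : LinearMap.ker q' = LinearMap.ker q := by
    ext x
    simp [hq'def, LinearMap.mem_ker]
  obtain ⟨sch⟩ := schanuel q' (LinearMap.range d₁.dualMap).mkQ hq'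
    (Submodule.mkQ_surjective _)
  -- exactness of the dual sequence
  have hexd : LinearMap.ker d₁.dualMap = LinearMap.range d₀.dualMap := by
    apply le_antisymm
    · intro φ hφ
      have hle : LinearMap.ker d₀ ≤ LinearMap.ker φ := by
        rw [← hex]
        rintro x ⟨y, rfl⟩
        exact LinearMap.congr_fun (LinearMap.mem_ker.mp hφ) y
      obtain ⟨ψ, hψ⟩ := factor_through d₀ hd₀ φ hle
      exact ⟨ψ, hψ⟩
    · rintro φ ⟨ψ, rfl⟩
      apply LinearMap.mem_ker.mpr
      apply LinearMap.ext; intro x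
      have hx : d₁ x ∈ LinearMap.ker d₀ := hex ▸ LinearMap.mem_range_self d₁ x
      simp [LinearMap.mem_ker.mp hx]
  -- assemble
  have eA : (K × Dual R P₁) ≃ₗ[R] (LinearMap.ker q' × Dual R P₁) :=
    LinearEquiv.prodCongr (eK.trans (LinearEquiv.ofEq _ _ hkq'.symm))
      (LinearEquiv.refl R (Dual R P₁))
  have eB : (LinearMap.ker (Submodule.mkQ (LinearMap.range d₁.dualMap))) ≃ₗ[R]
      (Dual R P₀ ⧸ LinearMap.range d₀.dualMap) :=
    (LinearEquiv.ofEq _ _ (Submodule.ker_mkQ _)).trans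
      ((d₁.dualMap.quotKerEquivRange).symm.trans (Submodule.quotEquivOfEq _ _ hexd))
  exact ⟨eA.trans (sch.trans (LinearEquiv.prodCongr eB (LinearEquiv.refl R Q)))⟩

end Helpers

theorem stmt_13 (R : Type u) [CommRing R] [IsNoetherianRing R]
    (L M N : ModuleCat.{u} R) [Module.Finite R L] [Module.Finite R M] [Module.Finite R N]
    (f : L →ₗ[R] M) (g : M →ₗ[R] N)
    (hf : Function.Injective f) (hg : Function.Surjective g)
    (hfg : LinearMap.range f = LinearMap.ker g)
    (hL : Subsingleton (Module.Dual R L)) :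
    ∀ (TM TN KM KN : ModuleCat.{u} R),
      IsTransposeOf R TM M → IsSyzygyOf R KM TM →
      IsTransposeOf R TN N → IsSyzygyOf R KN TN →
      StablyIso R KM KN := by
  intro TM TN KM KN hTM hKM hTN hKN
  obtain ⟨P₁, P₀, d₁, d₀, hP₁p, hP₁f, hP₀p, hP₀f, hd₀, hex, ⟨eT⟩⟩ := hTM
  obtain ⟨Q, qm, hQp, hQf, hqm, ⟨eK⟩⟩ := hKM
  obtain ⟨P₁', P₀', d₁', d₀', hP₁p', hP₁f', hP₀p', hP₀f', hd₀', hex', ⟨eT'⟩⟩ := hTN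
  obtain ⟨Q', qn, hQp', hQf', hqn, ⟨eK'⟩⟩ := hKN
  haveI := hP₁p; haveI := hP₁f; haveI := hP₀p; haveI := hP₀f
  haveI := hP₁p'; haveI := hP₁f'; haveI := hP₀p'; haveI := hP₀f'
  haveI := hQp; haveI := hQf; haveI := hQp'; haveI := hQf'
  obtain ⟨E1⟩ := trSyzygy d₁ d₀ hd₀ hex eT qm hqm eK
  obtain ⟨E2⟩ := trSyzygy d₁' d₀' hd₀' hex' eT' qn hqn eK'
  have hgd : Function.Surjective (g.dualMap) := by
    intro φ
    have hker : LinearMap.ker g ≤ LinearMap.ker φ := by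
      rw [← hfg]
      rintro x ⟨l, rfl⟩
      have h0 : φ ∘ₗ f = 0 := Subsingleton.elim _ _
      exact LinearMap.congr_fun h0 l
    obtain ⟨ψ, hψ⟩ := factor_through g hg φ hker
    exact ⟨ψ, hψ⟩
  set gd : ↥P₀ →ₗ[R] ↥N := g ∘ₗ d₀ with hgddef
  have hgds : Function.Surjective gd := by
    intro n
    obtain ⟨m, rfl⟩ := hg n
    obtain ⟨x, rfl⟩ := hd₀ m
    exact ⟨x, rfl⟩
  have hrange : LinearMap.range gd.dualMap = LinearMap.range d₀.dualMap := by
    have hcomp : gd.dualMap = d₀.dualMap ∘ₗ g.dualMap := rfl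
    rw [hcomp, LinearMap.range_comp, LinearMap.range_eq_top.mpr hgd, Submodule.map_top]
  obtain ⟨E3⟩ := coSchanuel gd d₀' hgds hd₀'
  have eCM : (Module.Dual R ↥P₀ ⧸ LinearMap.range d₀.dualMap) ≃ₗ[R]
      (Module.Dual R ↥P₀ ⧸ LinearMap.range gd.dualMap) :=
    Submodule.quotEquivOfEq _ _ hrange.symm
  refine ⟨ModuleCat.of R (Module.Dual R ↥P₁ × (Module.Dual R ↥P₀' × ↥Q')),
    ModuleCat.of R (Module.Dual R ↥P₁' × (Module.Dual R ↥P₀ × ↥Q)),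
    ?_, ?_, ?_, ?_, ⟨?_⟩⟩
  · exact (inferInstance :
      Module.Projective R (Module.Dual R ↥P₁ × (Module.Dual R ↥P₀' × ↥Q')))
  · exact (inferInstance :
      Module.Finite R (Module.Dual R ↥P₁ × (Module.Dual R ↥P₀' × ↥Q')))
  · exact (inferInstance :
      Module.Projective R (Module.Dual R ↥P₁' × (Module.Dual R ↥P₀ × ↥Q)))
  · exact (inferInstance :
      Module.Finite R (Module.Dual R ↥P₁' × (Module.Dual R ↥P₀ × ↥Q)))
  -- abbreviations
  have s1 := (LinearEquiv.prodAssoc R ↥KM (Module.Dual R ↥P₁)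
    (Module.Dual R ↥P₀' × ↥Q')).symm
  have s2 := LinearEquiv.prodCongr E1 (LinearEquiv.refl R (Module.Dual R ↥P₀' × ↥Q'))
  have s3 := LinearEquiv.prodProdProdComm R
    (Module.Dual R ↥P₀ ⧸ LinearMap.range d₀.dualMap) ↥Q (Module.Dual R ↥P₀') ↥Q'
  have s4 := LinearEquiv.prodCongr
    ((LinearEquiv.prodCongr eCM (LinearEquiv.refl R (Module.Dual R ↥P₀'))).trans E3)
    (LinearEquiv.refl R (↥Q × ↥Q'))
  have s5a := LinearEquiv.prodCongr
    (LinearEquiv.refl R ((Module.Dual R ↥P₀' ⧸ LinearMap.range d₀'.dualMap) ×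
      Module.Dual R ↥P₀))
    (LinearEquiv.prodComm R ↥Q ↥Q')
  have s5 := LinearEquiv.prodProdProdComm R
    (Module.Dual R ↥P₀' ⧸ LinearMap.range d₀'.dualMap) (Module.Dual R ↥P₀) ↥Q' ↥Q
  have s6 := LinearEquiv.prodCongr E2.symm (LinearEquiv.refl R (Module.Dual R ↥P₀ × ↥Q))
  have s7 := LinearEquiv.prodAssoc R ↥KN (Module.Dual R ↥P₁') (Module.Dual R ↥P₀ × ↥Q)
  exact ((((((s1.trans s2).trans s3).trans s4).trans s5a).trans s5).trans s6).trans s7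
end

section
/- Let R be a two-sided Noetherian ring and n ≥ 1. If M is a nonzero finitely generated R-module that is perfect of grade n (i.e., grade_R M = pd_R M = n), then Ext^n_R(M, R) is a perfect R^op-module of grade n, and Ext^n_{R^op}(Ext^n_R(M,R), R) ≅ M. -/
open CategoryTheory IsLocalRing

universe u

namespace Stmt16Aux

open CategoryTheory Limits

noncomputable section

variable {R : Type u} [CommRing R]

/-! ### Basic module-category facts -/

lemma subsingleton_iff_isZero (M : ModuleCat.{u} R) : Subsingleton M ↔ IsZero M := by
  constructor
  · intro _; exact ModuleCat.isZero_of_subsingleton M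
  · intro h
    have h0 : (𝟙 M : M ⟶ M) = 0 := h.eq_of_src _ _
    refine ⟨fun x y => ?_⟩
    have hx : x = (𝟙 M : M ⟶ M) x := rfl
    have hy : y = (𝟙 M : M ⟶ M) y := rfl
    rw [hx, hy, h0]; rfl

lemma range_zero_mor {A B : ModuleCat.{u} R} : LinearMap.range (0 : A ⟶ B).hom = ⊥ := by
  show LinearMap.range (0 : A →ₗ[R] B) = ⊥
  exact LinearMap.range_zero

lemma ker_zero_mor {A B : ModuleCat.{u} R} : LinearMap.ker (0 : A ⟶ B).hom = ⊤ := by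
  show LinearMap.ker (0 : A →ₗ[R] B) = ⊤
  exact LinearMap.ker_zero

lemma range_eqToHom {A B : ModuleCat.{u} R} (h : A = B) :
    LinearMap.range (eqToHom h : A ⟶ B).hom = ⊤ := by
  subst h
  rw [eqToHom_refl]
  show LinearMap.range (LinearMap.id : A →ₗ[R] A) = ⊤
  exact LinearMap.range_id

lemma ker_eqToHom {A B : ModuleCat.{u} R} (h : A = B) :
    LinearMap.ker (eqToHom h : A ⟶ B).hom = ⊥ := by
  subst h
  rw [eqToHom_refl]
  show LinearMap.ker (LinearMap.id : A →ₗ[R] A) = ⊥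
  exact LinearMap.ker_id

/-- Cast along an equality of objects of `ModuleCat`. -/
def castEquiv {A B : ModuleCat.{u} R} (h : A = B) : A ≃ₗ[R] B := by
  subst h; exact LinearEquiv.refl R A

/-! ### Double-dual lemmas -/

section DD

variable {A B C₀ : Type u} [AddCommGroup A] [Module R A] [AddCommGroup B] [Module R B]
  [AddCommGroup C₀] [Module R C₀]

lemma ddual_eval (f : A →ₗ[R] B) (x : A) :
    f.dualMap.dualMap (Module.Dual.eval R A x) = Module.Dual.eval R B (f x) := rfl

lemma ddual_ker_eq_bot [Module.IsReflexive R A] [Module.IsReflexive R B]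
    (f : A →ₗ[R] B) (hf : LinearMap.ker f = ⊥) :
    LinearMap.ker (f.dualMap.dualMap) = ⊥ := by
  rw [LinearMap.ker_eq_bot] at hf ⊢
  intro ξ η h
  obtain ⟨x, rfl⟩ := (Module.bijective_dual_eval R A).2 ξ
  obtain ⟨y, rfl⟩ := (Module.bijective_dual_eval R A).2 η
  rw [ddual_eval, ddual_eval] at h
  exact congrArg _ (hf ((Module.bijective_dual_eval R B).1 h))

lemma ddual_range_eq_ker [Module.IsReflexive R B] [Module.IsReflexive R C₀]
    (f : A →ₗ[R] B) (g : B →ₗ[R] C₀) (h : LinearMap.range f = LinearMap.ker g) :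
    LinearMap.range (f.dualMap.dualMap) = LinearMap.ker (g.dualMap.dualMap) := by
  have hgf : ∀ a, g (f a) = 0 := by
    intro a
    have : f a ∈ LinearMap.ker g := by rw [← h]; exact ⟨a, rfl⟩
    simpa using this
  ext ξ
  obtain ⟨b, rfl⟩ := (Module.bijective_dual_eval R B).2 ξ
  constructor
  · rintro ⟨α, hα⟩
    rw [LinearMap.mem_ker]
    apply LinearMap.ext
    intro φ
    rw [← hα]
    show α ((φ.comp g).comp f) = (0 : Module.Dual R (Module.Dual R C₀)) φ
    have : (φ.comp g).comp f = 0 := by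
      apply LinearMap.ext; intro a
      simp [hgf a]
    rw [this]
    simp
  · intro hb
    have hgb : g b = 0 := by
      have h1 : Module.Dual.eval R C₀ (g b) = 0 := by
        rw [← ddual_eval g b]; simpa using hb
      have h2 : Module.Dual.eval R C₀ (g b) = Module.Dual.eval R C₀ 0 := by
        rw [h1]; simp
      exact (Module.bijective_dual_eval R C₀).1 h2
    have : b ∈ LinearMap.ker g := by simpa using hgb
    rw [← h] at this
    obtain ⟨a, rfl⟩ := this
    exact ⟨Module.Dual.eval R A a, (ddual_eval f a)⟩

end DD

/-! ### Finite projective resolutions -/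

/-- A length-`n` resolution of `M` by finite projective modules, padded above degree `n` by
an exact complex of finite projectives. -/
structure FPRes (n : ℕ) (M : ModuleCat.{u} R) where
  X : ℕ → ModuleCat.{u} R
  d : ∀ i : ℕ, X (i + 1) ⟶ X i
  π : X 0 ⟶ M
  projective : ∀ i, Module.Projective R (X i)
  finite : ∀ i, Module.Finite R (X i)
  dzero : d n = 0
  surj : Function.Surjective π
  ex0 : LinearMap.range (d 0).hom = LinearMap.ker π.hom
  exs : ∀ i, LinearMap.range (d (i + 1)).hom = LinearMap.ker (d i).hom

namespace FPRes

variable {n : ℕ} {M : ModuleCat.{u} R} (F : FPRes n M)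

lemma dd (i : ℕ) : F.d (i + 1) ≫ F.d i = 0 := by
  apply ModuleCat.hom_ext; apply LinearMap.ext
  intro x
  have : F.d (i + 1) x ∈ LinearMap.ker (F.d i).hom := by
    rw [← F.exs i]; exact ⟨x, rfl⟩
  simpa using this

/-- The underlying chain complex. -/
def complex : ChainComplex (ModuleCat.{u} R) ℕ := ChainComplex.of F.X F.d F.dd

@[simp] lemma complex_X (i : ℕ) : F.complex.X i = F.X i := rfl
@[simp] lemma complex_d (i : ℕ) : F.complex.d (i + 1) i = F.d i := ChainComplex.of_d _ _ i

lemma complex_exact {a b c : ℕ} (hab : a = b + 1) (hbc : b = c + 1) :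
    LinearMap.range (F.complex.d a b).hom = LinearMap.ker (F.complex.d b c).hom := by
  subst hab; subst hbc
  rw [F.complex_d, F.complex_d]
  exact F.exs c

lemma complex_ker_bot {a b : ℕ} (hab : a = b + 1) (hn : a = n) :
    LinearMap.ker (F.complex.d a b).hom = ⊥ := by
  subst hab
  rw [show LinearMap.ker (F.complex.d (b + 1) b).hom = LinearMap.ker (F.d b).hom by
    rw [F.complex_d]; rfl, ← F.exs b, hn, F.dzero, range_zero_mor]
  rfl

lemma d_comp_π : F.complex.d 1 0 ≫ F.π = 0 := by
  rw [F.complex_d 0]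
  apply ModuleCat.hom_ext; apply LinearMap.ext
  intro x
  have : F.d 0 x ∈ LinearMap.ker F.π.hom := by rw [← F.ex0]; exact ⟨x, rfl⟩
  exact this

instance (i : ℕ) : Projective (F.complex.X i) :=
  (IsProjective.iff_projective _).mp (F.projective i)

/-- The associated projective resolution. -/
def toRes : ProjectiveResolution M where
  complex := F.complex
  π := (F.complex.toSingle₀Equiv M).symm ⟨F.π, F.d_comp_π⟩
  quasiIso := by
    constructor
    intro i
    match i with
    | 0 =>
      have hf : ((F.complex.toSingle₀Equiv M).symm ⟨F.π, F.d_comp_π⟩).f 0 = F.π :=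
        ChainComplex.toSingle₀Equiv_symm_apply_f_zero _ _
      rw [ChainComplex.quasiIsoAt₀_iff, ShortComplex.quasiIso_iff_of_zeros']
      rotate_left
      · exact F.complex.shape _ _ (by simp)
      · exact (HomologicalComplex.isZero_single_obj_X (ComplexShape.down ℕ) 0 M 1
          (by simp)).eq_of_src _ _
      · exact ((ChainComplex.single₀ (ModuleCat.{u} R)).obj M).shape _ _ (by simp)
      constructor
      · rw [ShortComplex.moduleCat_exact_iff_range_eq_ker]
        show LinearMap.range (F.complex.d 1 0).hom = LinearMap.ker
          ((((F.complex.toSingle₀Equiv M).symm ⟨F.π, F.d_comp_π⟩)).f 0).hom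
        rw [hf, F.complex_d 0]
        exact F.ex0
      · rw [ModuleCat.epi_iff_surjective]
        show Function.Surjective
          ((((F.complex.toSingle₀Equiv M).symm ⟨F.π, F.d_comp_π⟩)).f 0)
        rw [hf]
        exact F.surj
    | (i + 1) =>
      rw [quasiIsoAt_iff_exactAt' _ _ (ChainComplex.exactAt_succ_single_obj M i)]
      rw [HomologicalComplex.exactAt_iff' _ (i + 2) (i + 1) i (by simp) (by simp)]
      rw [ShortComplex.moduleCat_exact_iff_range_eq_ker]
      show LinearMap.range (F.complex.d (i + 2) (i + 1)).hom =
        LinearMap.ker (F.complex.d (i + 1) i).hom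
      rw [F.complex_d, F.complex_d]
      exact F.exs i

/-- Transport a resolution along an isomorphism of the resolved module. -/
def congr {M' : ModuleCat.{u} R} (e : M ≃ₗ[R] M') : FPRes n M' where
  X := F.X
  d := F.d
  π := ModuleCat.ofHom (e.toLinearMap.comp F.π.hom)
  projective := F.projective
  finite := F.finite
  dzero := F.dzero
  surj := e.surjective.comp F.surj
  ex0 := by
    rw [F.ex0, ModuleCat.hom_ofHom, LinearMap.ker_comp, LinearEquiv.ker e, Submodule.comap_bot]
  exs := F.exs

end FPRes

/-! ### `HasProjResolLength` versus `FPRes` -/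

lemma fpRes_of_hasProjResolLength :
    ∀ (n : ℕ) (M : ModuleCat.{u} R), HasProjResolLength R n M → Nonempty (FPRes n M)
  | 0, M, h => by
    obtain ⟨hproj, hfin⟩ := h
    refine ⟨⟨fun _ => M, fun i => if Even i then 0 else 𝟙 M, 𝟙 M,
      fun _ => hproj, fun _ => hfin, ?_, Function.surjective_id, ?_, ?_⟩⟩
    · simp
    · rw [if_pos Even.zero]
      show LinearMap.range (0 : M →ₗ[R] M) = LinearMap.ker (LinearMap.id : M →ₗ[R] M)
      simp
    · intro i
      rcases Nat.even_or_odd i with he | ho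
      · rw [if_pos he, if_neg (by rw [Nat.even_add_one]; exact fun h => h he)]
        show LinearMap.range (LinearMap.id : M →ₗ[R] M) = LinearMap.ker (0 : M →ₗ[R] M)
        simp
      · have hno : ¬ Even i := Nat.not_even_iff_odd.mpr ho
        rw [if_neg hno, if_pos (Nat.even_add_one.mpr hno)]
        show LinearMap.range (0 : M →ₗ[R] M) = LinearMap.ker (LinearMap.id : M →ₗ[R] M)
        simp
  | n + 1, M, h => by
    obtain ⟨P, f, hP, hPfin, hsurj, hrec⟩ := h
    obtain ⟨Q⟩ := fpRes_of_hasProjResolLength n _ hrec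
    refine ⟨⟨fun i => match i with | 0 => P | (j + 1) => Q.X j,
      fun i => match i with
        | 0 => ModuleCat.ofHom ((LinearMap.ker f).subtype.comp Q.π.hom)
        | (j + 1) => Q.d j,
      ModuleCat.ofHom f,
      fun i => match i with | 0 => hP | (j + 1) => Q.projective j,
      fun i => match i with | 0 => hPfin | (j + 1) => Q.finite j,
      Q.dzero, hsurj, ?_, ?_⟩⟩
    · show LinearMap.range ((LinearMap.ker f).subtype.comp Q.π.hom) = LinearMap.ker f
      rw [LinearMap.range_comp, LinearMap.range_eq_top.mpr Q.surj, Submodule.map_top,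
        Submodule.range_subtype]
    · intro i
      match i with
      | 0 =>
        show LinearMap.range (Q.d 0).hom = LinearMap.ker ((LinearMap.ker f).subtype.comp Q.π.hom)
        rw [LinearMap.ker_comp, Submodule.ker_subtype, Submodule.comap_bot, Q.ex0]
      | (j + 1) =>
        show LinearMap.range (Q.d (j + 1)).hom = LinearMap.ker (Q.d j).hom
        exact Q.exs j

lemma FPRes.hasProjResolLength :
    ∀ (n : ℕ) (M : ModuleCat.{u} R), FPRes n M → HasProjResolLength R n M
  | 0, M, F => by
    have hinj : Function.Injective F.π.hom := by
      rw [← LinearMap.ker_eq_bot, ← F.ex0, F.dzero]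
      exact range_zero_mor
    have e : (F.X 0 : Type u) ≃ₗ[R] M := LinearEquiv.ofBijective F.π.hom ⟨hinj, F.surj⟩
    haveI := F.projective 0
    haveI := F.finite 0
    exact ⟨Module.Projective.of_equiv e, Module.Finite.equiv e⟩
  | n + 1, M, F => by
    refine ⟨F.X 0, F.π.hom, F.projective 0, F.finite 0, F.surj,
      FPRes.hasProjResolLength n _ ⟨fun i => F.X (i + 1), fun i => F.d (i + 1),
        (ModuleCat.ofHom ((F.d 0).hom.codRestrict (LinearMap.ker F.π.hom) (fun x => ?_)) :
          F.X 1 ⟶ ModuleCat.of R (LinearMap.ker F.π.hom)),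
        fun i => F.projective (i + 1), fun i => F.finite (i + 1), F.dzero, ?_, ?_,
        fun i => F.exs (i + 1)⟩⟩
    · rw [← F.ex0]; exact ⟨x, rfl⟩
    · rintro ⟨y, hy⟩
      rw [← F.ex0] at hy
      obtain ⟨x, hx⟩ := LinearMap.mem_range.mp hy
      exact ⟨x, Subtype.ext hx⟩
    · show LinearMap.range (F.d 1).hom = LinearMap.ker ((F.d 0).hom.codRestrict _ _)
      rw [LinearMap.ker_codRestrict]
      exact F.exs 0

/-! ### The dual complex and `Ext` -/

section DualC

variable {M : ModuleCat.{u} R} (P : ProjectiveResolution M)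

/-- The cochain complex `Hom(P_•, R)`. -/
def dualC : CochainComplex (ModuleCat.{u} R) ℕ where
  X i := ModuleCat.of R (Module.Dual R (P.complex.X i))
  d i j := ModuleCat.ofHom (LinearMap.dualMap (P.complex.d j i).hom)
  shape i j h := by
    rw [P.complex.shape j i (by simpa using h)]
    ext φ x
    simp
  d_comp_d' i j k _ _ := by
    ext φ x
    have h : (P.complex.d k j ≫ P.complex.d j i).hom x = 0 := by
      rw [P.complex.d_comp_d]; rfl
    exact (congrArg φ h).trans (map_zero φ)

lemma dualC_d (i j : ℕ) : (dualC P).d i j =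
    ModuleCat.ofHom (LinearMap.dualMap (P.complex.d j i).hom) := rfl

/-- `dualC` is isomorphic to the `linearYonedaObj` complex. -/
def dualCIso : P.complex.linearYonedaObj R (ModuleCat.of R R) ≅ dualC P :=
  HomologicalComplex.Hom.isoOfComponents
    (fun i => (ModuleCat.homLinearEquiv (S := R)).toModuleIso)
    (by intro i j _; ext f x; rfl)

lemma subsingleton_ext_iff (i j : ℕ) (hj : (ComplexShape.up ℕ).prev i = j) :
    Subsingleton (((Ext R (ModuleCat.{u} R) i).obj (Opposite.op M)).obj (ModuleCat.of R R)) ↔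
      LinearMap.range ((dualC P).d j i).hom = LinearMap.ker ((dualC P).d i (i + 1)).hom := by
  have e := (P.isoExt (R := R) i (ModuleCat.of R R) ≪≫
    HomologicalComplex.homologyMapIso (dualCIso P) i).toLinearEquiv
  rw [Equiv.subsingleton_congr e.toEquiv]
  show Subsingleton ((dualC P).homology i) ↔ _
  rw [subsingleton_iff_isZero, ← HomologicalComplex.exactAt_iff_isZero_homology,
    HomologicalComplex.exactAt_iff' _ j i (i + 1) hj (by simp),
    ShortComplex.moduleCat_exact_iff_range_eq_ker]
  rfl

variable {n : ℕ}

lemma ext_top_equiv (hd : (dualC P).d n (n + 1) = 0)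
    {T : Type u} [AddCommGroup T] [Module R T] (t : (dualC P).X n →ₗ[R] T)
    (hsurj : Function.Surjective t)
    (hker : LinearMap.ker t = LinearMap.range ((dualC P).d (n - 1) n).hom) :
    Nonempty ((((Ext R (ModuleCat.{u} R) n).obj (Opposite.op M)).obj (ModuleCat.of R R))
      ≃ₗ[R] T) := by
  have hprev : (ComplexShape.up ℕ).prev n = n - 1 := by cases n <;> simp
  set S := (dualC P).sc' (n - 1) n (n + 1) with hS
  have e1 := (P.isoExt (R := R) n (ModuleCat.of R R) ≪≫
    HomologicalComplex.homologyMapIso (dualCIso P) n).toLinearEquiv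
  have e2 := ((dualC P).homologyIsoSc' (n - 1) n (n + 1) hprev (by simp)).toLinearEquiv
  have e3 := S.moduleCatHomologyIso.toLinearEquiv
  have hg : S.g = 0 := hd
  let u : LinearMap.ker S.g.hom →ₗ[R] T := t ∘ₗ (LinearMap.ker S.g.hom).subtype
  have hu_surj : Function.Surjective u := by
    intro y
    obtain ⟨x, hx⟩ := hsurj y
    exact ⟨⟨x, by show S.g.hom x = 0; rw [hg]; rfl⟩, hx⟩
  have hu_ker : LinearMap.ker u = LinearMap.range S.moduleCatToCycles := by
    ext z
    have h1 : z ∈ LinearMap.ker u ↔ z.1 ∈ LinearMap.ker t := Iff.rfl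
    rw [h1, hker]
    constructor
    · intro hz
      obtain ⟨w, hw⟩ := hz
      exact LinearMap.mem_range.mpr ⟨w, Subtype.ext hw⟩
    · intro hz
      obtain ⟨w, hw⟩ := LinearMap.mem_range.mp hz
      exact ⟨w, congrArg Subtype.val hw⟩
  have e4 : (LinearMap.ker S.g.hom ⧸ LinearMap.range S.moduleCatToCycles) ≃ₗ[R] T :=
    (Submodule.quotEquivOfEq _ _ hu_ker.symm).trans (u.quotKerEquivOfSurjective hu_surj)
  exact ⟨e1.trans (e2.trans (e3.trans e4))⟩

end DualC

/-- Transport of `Ext` modules along an isomorphism. -/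
def extCongr {M M' : ModuleCat.{u} R} (e : M ≅ M') (i : ℕ) (N : ModuleCat.{u} R) :
    (((Ext R (ModuleCat.{u} R) i).obj (Opposite.op M)).obj N) ≃ₗ[R]
      (((Ext R (ModuleCat.{u} R) i).obj (Opposite.op M')).obj N) :=
  (((Ext R (ModuleCat.{u} R) i).mapIso e.op.symm).app N).toLinearEquiv

/-! ### The dualized resolution -/

section Dualize

lemma FPRes.toRes_complex {n : ℕ} {M : ModuleCat.{u} R} (F : FPRes n M) :
    F.toRes.complex = F.complex := rfl

variable {k : ℕ} {M : ModuleCat.{u} R} (F : FPRes (k + 1) M)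

/-- The differentials of the reversed dual complex. -/
def dualD (j : ℕ) : (dualC F.toRes).X (k + 1 - (j + 1)) ⟶ (dualC F.toRes).X (k + 1 - j) :=
  if h : j + 1 ≤ k + 1 then (dualC F.toRes).d (k + 1 - (j + 1)) (k + 1 - j)
  else if Even (j - (k + 1)) then 0
  else eqToHom (congrArg (dualC F.toRes).X (by omega))

lemma dualD_of_le {j : ℕ} (h : j + 1 ≤ k + 1) :
    dualD F j = (dualC F.toRes).d (k + 1 - (j + 1)) (k + 1 - j) := dif_pos h

lemma dualD_top : dualD F (k + 1) = 0 := by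
  rw [dualD, dif_neg (by omega), if_pos (by rw [Nat.sub_self]; exact Even.zero)]

lemma dualC_exact (hexA : ∀ i, i + 2 ≤ k + 1 →
      LinearMap.range ((dualC F.toRes).d i (i + 1)).hom =
        LinearMap.ker ((dualC F.toRes).d (i + 1) (i + 2)).hom)
    {a b c : ℕ} (hab : a + 1 = b) (hbc : b + 1 = c) (hbk : b ≤ k) :
    LinearMap.range ((dualC F.toRes).d a b).hom = LinearMap.ker ((dualC F.toRes).d b c).hom := by
  subst hab; subst hbc
  exact hexA a (by omega)

lemma dualC_ker_bot (hexB : LinearMap.ker ((dualC F.toRes).d 0 1).hom = ⊥)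
    {b c : ℕ} (hb : b = 0) (hc : c = 1) :
    LinearMap.ker ((dualC F.toRes).d b c).hom = ⊥ := by
  subst hb; subst hc; exact hexB

/-- The reversed dual complex as a finite projective resolution of the transpose-type module. -/
def dualFPRes (hexA : ∀ i, i + 2 ≤ k + 1 →
      LinearMap.range ((dualC F.toRes).d i (i + 1)).hom =
        LinearMap.ker ((dualC F.toRes).d (i + 1) (i + 2)).hom)
    (hexB : LinearMap.ker ((dualC F.toRes).d 0 1).hom = ⊥) : FPRes (k + 1) (ModuleCat.of R
    (↥((dualC F.toRes).X (k + 1)) ⧸ LinearMap.range ((dualC F.toRes).d k (k + 1)).hom)) where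
  X := fun j => (dualC F.toRes).X (k + 1 - j)
  d := dualD F
  π := ModuleCat.ofHom (LinearMap.range ((dualC F.toRes).d k (k + 1)).hom).mkQ
  projective := fun j => by
    haveI := F.projective (k + 1 - j)
    haveI := F.finite (k + 1 - j)
    exact (inferInstance : Module.Projective R (Module.Dual R (F.X (k + 1 - j))))
  finite := fun j => by
    haveI := F.projective (k + 1 - j)
    haveI := F.finite (k + 1 - j)
    exact (inferInstance : Module.Finite R (Module.Dual R (F.X (k + 1 - j))))
  dzero := dualD_top F
  surj := Submodule.mkQ_surjective _
  ex0 := by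
    rw [dualD_of_le F (by omega)]
    exact (Submodule.ker_mkQ _).symm
  exs := by
    intro j
    rcases lt_trichotomy (j + 1) (k + 1) with hlt | heq | hgt
    · rw [dualD_of_le F (by omega), dualD_of_le F (by omega)]
      exact dualC_exact F hexA (by omega) (by omega) (by omega)
    · have hj : j = k := by omega
      subst hj
      rw [dualD_top F, range_zero_mor, dualD_of_le F (by omega)]
      exact (dualC_ker_bot F hexB (by omega) (by omega)).symm
    · have h1 : ¬ (j + 1 + 1 ≤ k + 1) := by omega
      have h2 : ¬ (j + 1 ≤ k + 1) := by omega
      rcases Nat.even_or_odd (j - (k + 1)) with he | ho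
      · have ho' : ¬ Even (j + 1 - (k + 1)) := by
          rw [show j + 1 - (k + 1) = (j - (k + 1)) + 1 from by omega, Nat.even_add_one]
          exact fun h => h he
        rw [dualD, dif_neg h1, if_neg ho', dualD, dif_neg h2, if_pos he,
          range_eqToHom, ker_zero_mor]
      · have he' : Even (j + 1 - (k + 1)) := by
          rw [show j + 1 - (k + 1) = (j - (k + 1)) + 1 from by omega, Nat.even_add_one]
          exact fun h => (Nat.not_even_iff_odd.mpr ho) h
        rw [dualD, dif_neg h1, if_pos he', range_zero_mor, dualD, dif_neg h2,
          if_neg (Nat.not_even_iff_odd.mpr ho), ker_eqToHom]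

end Dualize

/-! ### Computing `Ext` of the transpose -/

/-- `Ext^{k+1}` of a module with an `FPRes (k+1)` resolution is the cokernel of the last dual
differential. -/
lemma stepD_coker {k : ℕ} {M' : ModuleCat.{u} R} (G : FPRes (k + 1) M') :
    Nonempty ((((Ext R (ModuleCat.{u} R) (k + 1)).obj (Opposite.op M')).obj (ModuleCat.of R R))
      ≃ₗ[R] (↥((dualC G.toRes).X (k + 1)) ⧸
        LinearMap.range ((dualC G.toRes).d k (k + 1)).hom)) := by
  refine ext_top_equiv G.toRes ?_ (LinearMap.range ((dualC G.toRes).d k (k + 1)).hom).mkQ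
    (Submodule.mkQ_surjective _) ?_
  · rw [dualC_d]
    show ModuleCat.ofHom (LinearMap.dualMap (G.complex.d (k + 1 + 1) (k + 1)).hom) = 0
    rw [G.complex_d, G.dzero]
    apply ModuleCat.hom_ext; apply LinearMap.ext
    intro φ
    apply LinearMap.ext
    intro x
    show φ ((0 : G.X (k + 2) ⟶ G.X (k + 1)) x) = 0
    exact map_zero φ
  · rw [Submodule.ker_mkQ]
    rfl

/-- The cokernel of the double-dualized first differential is `M` back again. -/
lemma coker_equiv {n : ℕ} {M : ModuleCat.{u} R} (F : FPRes n M) {p q : ℕ}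
    (hp : p = 1) (hq : q = 0) :
    Nonempty ((Module.Dual R (Module.Dual R ↥(F.complex.X q)) ⧸
      LinearMap.range ((F.complex.d p q).hom.dualMap.dualMap)) ≃ₗ[R] ↥M) := by
  subst hp; subst hq
  haveI := F.projective 0
  haveI := F.finite 0
  haveI := F.projective 1
  haveI := F.finite 1
  have hmap : Submodule.map ((Module.evalEquiv R ↥(F.X 0)).symm.toLinearMap :
      Module.Dual R (Module.Dual R ↥(F.complex.X 0)) →ₗ[R] ↥(F.X 0))
      (LinearMap.range ((F.complex.d 1 0).hom.dualMap.dualMap)) = LinearMap.ker F.π.hom := by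
    ext y
    rw [Submodule.mem_map, ← F.ex0]
    constructor
    · rintro ⟨ξ, hξ, hy⟩
      obtain ⟨η, hη⟩ := LinearMap.mem_range.mp hξ
      obtain ⟨z, rfl⟩ := (Module.bijective_dual_eval R ↥(F.X 1)).2 η
      have h2 : (Module.evalEquiv R ↥(F.X 0)) (F.complex.d 1 0 z) = ξ := hη
      have h3 : F.complex.d 1 0 z = y := by
        rw [← hy, ← h2]
        exact ((Module.evalEquiv R ↥(F.X 0)).symm_apply_apply _).symm
      refine ⟨z, ?_⟩
      rw [← h3]
      exact congrArg (fun g => ModuleCat.Hom.hom g z) (F.complex_d 0).symm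
    · rintro ⟨z, hz⟩
      refine ⟨(Module.evalEquiv R ↥(F.X 0)) (F.complex.d 1 0 z),
        LinearMap.mem_range.mpr ⟨Module.Dual.eval R ↥(F.X 1) z, rfl⟩, ?_⟩
      refine ((Module.evalEquiv R ↥(F.X 0)).symm_apply_apply (F.complex.d 1 0 z)).trans ?_
      rw [F.complex_d 0]
      exact hz
  exact ⟨(Submodule.Quotient.equiv _ _ (Module.evalEquiv R ↥(F.X 0)).symm hmap).trans
    (F.π.hom.quotKerEquivOfSurjective F.surj)⟩

section StepD

variable {k : ℕ} {M : ModuleCat.{u} R} (F : FPRes (k + 1) M)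

lemma stepD_vanish (hexA : ∀ i, i + 2 ≤ k + 1 →
      LinearMap.range ((dualC F.toRes).d i (i + 1)).hom =
        LinearMap.ker ((dualC F.toRes).d (i + 1) (i + 2)).hom)
    (hexB : LinearMap.ker ((dualC F.toRes).d 0 1).hom = ⊥) (i : ℕ) (hi : i < k + 1) :
    Subsingleton (((Ext R (ModuleCat.{u} R) i).obj (Opposite.op (ModuleCat.of R
      (↥((dualC F.toRes).X (k + 1)) ⧸
        LinearMap.range ((dualC F.toRes).d k (k + 1)).hom)))).obj (ModuleCat.of R R)) := by
  set G := dualFPRes F hexA hexB with hG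
  match i, hi with
  | 0, hi =>
    apply (subsingleton_ext_iff G.toRes 0 0 (by simp)).mpr
    rw [(dualC G.toRes).shape 0 0 (by simp), range_zero_mor, dualC_d G.toRes 0 1]
    show ⊥ = LinearMap.ker (LinearMap.dualMap (G.complex.d 1 0).hom)
    rw [G.complex_d 0]
    show ⊥ = LinearMap.ker (LinearMap.dualMap (dualD F 0).hom)
    rw [dualD_of_le F (by omega), dualC_d F.toRes]
    show ⊥ = LinearMap.ker
      ((F.complex.d (k + 1 - 0) (k + 1 - (0 + 1))).hom.dualMap.dualMap)
    haveI : Module.Projective R ↥(F.complex.X (k + 1 - 0)) := F.projective (k + 1 - 0)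
    haveI : Module.Finite R ↥(F.complex.X (k + 1 - 0)) := F.finite (k + 1 - 0)
    haveI : Module.Projective R ↥(F.complex.X (k + 1 - (0 + 1))) := F.projective (k + 1 - (0 + 1))
    haveI : Module.Finite R ↥(F.complex.X (k + 1 - (0 + 1))) := F.finite (k + 1 - (0 + 1))
    exact (ddual_ker_eq_bot _ (F.complex_ker_bot (by omega) (by omega))).symm
  | (i' + 1), hi =>
    apply (subsingleton_ext_iff G.toRes (i' + 1) i' (by simp)).mpr
    rw [dualC_d G.toRes i' (i' + 1), dualC_d G.toRes (i' + 1) (i' + 2)]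
    show LinearMap.range (LinearMap.dualMap (G.complex.d (i' + 1) i').hom) =
      LinearMap.ker (LinearMap.dualMap (G.complex.d (i' + 2) (i' + 1)).hom)
    rw [G.complex_d i', G.complex_d (i' + 1)]
    show LinearMap.range (LinearMap.dualMap (dualD F i').hom) =
      LinearMap.ker (LinearMap.dualMap (dualD F (i' + 1)).hom)
    rw [dualD_of_le F (by omega), dualD_of_le F (by omega),
      dualC_d F.toRes, dualC_d F.toRes]
    show LinearMap.range ((F.complex.d (k + 1 - i') (k + 1 - (i' + 1))).hom.dualMap.dualMap) =
      LinearMap.ker ((F.complex.d (k + 1 - (i' + 1)) (k + 1 - (i' + 1 + 1))).hom.dualMap.dualMap)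
    haveI : Module.Projective R ↥(F.complex.X (k + 1 - (i' + 1))) :=
      F.projective (k + 1 - (i' + 1))
    haveI : Module.Finite R ↥(F.complex.X (k + 1 - (i' + 1))) := F.finite (k + 1 - (i' + 1))
    haveI : Module.Projective R ↥(F.complex.X (k + 1 - (i' + 1 + 1))) :=
      F.projective (k + 1 - (i' + 1 + 1))
    haveI : Module.Finite R ↥(F.complex.X (k + 1 - (i' + 1 + 1))) :=
      F.finite (k + 1 - (i' + 1 + 1))
    exact ddual_range_eq_ker _ _ (F.complex_exact (by omega) (by omega))

lemma stepD_final (hexA : ∀ i, i + 2 ≤ k + 1 →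
      LinearMap.range ((dualC F.toRes).d i (i + 1)).hom =
        LinearMap.ker ((dualC F.toRes).d (i + 1) (i + 2)).hom)
    (hexB : LinearMap.ker ((dualC F.toRes).d 0 1).hom = ⊥) :
    Nonempty ((((Ext R (ModuleCat.{u} R) (k + 1)).obj (Opposite.op (ModuleCat.of R
      (↥((dualC F.toRes).X (k + 1)) ⧸
        LinearMap.range ((dualC F.toRes).d k (k + 1)).hom)))).obj (ModuleCat.of R R))
      ≃ₗ[R] ↥M) := by
  set G := dualFPRes F hexA hexB with hG
  obtain ⟨e⟩ := stepD_coker G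
  have hsub : LinearMap.range ((dualC G.toRes).d k (k + 1)).hom =
      LinearMap.range ((LinearMap.id : ↥((dualC G.toRes).X (k + 1)) →ₗ[R] _) ∘ₗ
        (F.complex.d (k + 1 - k) (k + 1 - (k + 1))).hom.dualMap.dualMap) := by
    rw [dualC_d G.toRes k (k + 1)]
    show LinearMap.range (LinearMap.dualMap (G.complex.d (k + 1) k).hom) = _
    rw [G.complex_d k]
    show LinearMap.range (LinearMap.dualMap (dualD F k).hom) = _
    rw [dualD_of_le F (by omega), dualC_d F.toRes]
    rfl
  obtain ⟨e2⟩ := coker_equiv F (p := k + 1 - k) (q := k + 1 - (k + 1))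
    (by omega) (by omega)
  exact ⟨e.trans ((Submodule.quotEquivOfEq _ _ hsub).trans e2)⟩

end StepD

end

end Stmt16Aux

theorem stmt_16 (R : Type u) [CommRing R] [IsNoetherianRing R] (n : ℕ) (hn : 1 ≤ n)
    (M : ModuleCat.{u} R) [Module.Finite R M] [Nontrivial M]
    (hgrade : ∀ i : ℕ, i < n → extVanish R M (ModuleCat.of R R) i)
    (hgrade' : ¬ extVanish R M (ModuleCat.of R R) n)
    (hpd : HasProjResolLength R n M) :
    (∀ i : ℕ, i < n →
      extVanish R (((Ext R (ModuleCat.{u} R) n).obj (Opposite.op M)).obj (ModuleCat.of R R))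
        (ModuleCat.of R R) i) ∧
    ¬ extVanish R (((Ext R (ModuleCat.{u} R) n).obj (Opposite.op M)).obj (ModuleCat.of R R))
        (ModuleCat.of R R) n ∧
    HasProjResolLength R n
      (((Ext R (ModuleCat.{u} R) n).obj (Opposite.op M)).obj (ModuleCat.of R R)) ∧
    Nonempty ((((Ext R (ModuleCat.{u} R) n).obj
        (Opposite.op (((Ext R (ModuleCat.{u} R) n).obj (Opposite.op M)).obj
          (ModuleCat.of R R)))).obj (ModuleCat.of R R)) ≃ₗ[R] M) := by
  classical
  obtain ⟨k, rfl⟩ : ∃ k, n = k + 1 := ⟨n - 1, by omega⟩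
  obtain ⟨F⟩ := Stmt16Aux.fpRes_of_hasProjResolLength (k + 1) M hpd
  have hexA : ∀ i, i + 2 ≤ k + 1 →
      LinearMap.range ((Stmt16Aux.dualC F.toRes).d i (i + 1)).hom =
        LinearMap.ker ((Stmt16Aux.dualC F.toRes).d (i + 1) (i + 2)).hom := by
    intro i hi
    exact (Stmt16Aux.subsingleton_ext_iff F.toRes (i + 1) i (by simp)).mp
      (hgrade (i + 1) (by omega))
  have hexB : LinearMap.ker ((Stmt16Aux.dualC F.toRes).d 0 1).hom = ⊥ := by
    have h := (Stmt16Aux.subsingleton_ext_iff F.toRes 0 0 (by simp)).mp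
      (hgrade 0 (by omega))
    rw [(Stmt16Aux.dualC F.toRes).shape 0 0 (by simp), Stmt16Aux.range_zero_mor] at h
    exact h.symm
  have hd : (Stmt16Aux.dualC F.toRes).d (k + 1) (k + 1 + 1) = 0 := by
    rw [Stmt16Aux.dualC_d]
    show ModuleCat.ofHom (LinearMap.dualMap (F.complex.d (k + 1 + 1) (k + 1)).hom) = 0
    rw [F.complex_d, F.dzero]
    apply ModuleCat.hom_ext; apply LinearMap.ext
    intro φ
    apply LinearMap.ext
    intro x
    show φ ((0 : F.X (k + 2) ⟶ F.X (k + 1)) x) = 0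
    exact map_zero φ
  obtain ⟨eD⟩ := Stmt16Aux.ext_top_equiv F.toRes (n := k + 1) hd
    (LinearMap.range ((Stmt16Aux.dualC F.toRes).d k (k + 1)).hom).mkQ
    (Submodule.mkQ_surjective _) (by rw [Submodule.ker_mkQ]; rfl)
  obtain ⟨efin⟩ := Stmt16Aux.stepD_final F hexA hexB
  refine ⟨?_, ?_, ?_, ?_⟩
  · intro i hi
    show Subsingleton _
    exact (Equiv.subsingleton_congr
        (Stmt16Aux.extCongr eD.toModuleIso i (ModuleCat.of R R)).toEquiv).mpr
      (Stmt16Aux.stepD_vanish F hexA hexB i hi)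
  · intro hcon
    have h1 : Subsingleton (((Ext R (ModuleCat.{u} R) (k + 1)).obj (Opposite.op (ModuleCat.of R
        (↥((Stmt16Aux.dualC F.toRes).X (k + 1)) ⧸
          LinearMap.range ((Stmt16Aux.dualC F.toRes).d k (k + 1)).hom)))).obj
            (ModuleCat.of R R)) :=
      (Equiv.subsingleton_congr
        (Stmt16Aux.extCongr eD.toModuleIso (k + 1) (ModuleCat.of R R)).toEquiv).mp hcon
    have h2 : Subsingleton (M : Type u) :=
      (Equiv.subsingleton_congr efin.toEquiv).mp h1
    exact absurd h2 (not_subsingleton _)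
  · exact Stmt16Aux.FPRes.hasProjResolLength _ _
      ((Stmt16Aux.dualFPRes F hexA hexB).congr eD.symm)
  · exact ⟨(Stmt16Aux.extCongr eD.toModuleIso (k + 1) (ModuleCat.of R R)).trans efin⟩
end
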